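/- Let n be a natural number with prime factorisation n = p_1^{α_1} ⋯ p_t^{α_t} (the p_i distinct primes). Then every skew brace of order n is trivial (i.e., a ∘ b = a + b for all a, b) if and only if α_i = 1 for every i and p_i does not divide p_j − 1 for all i ≠ j. -/

import Mathlib

/-! ## Auxiliary number-theoretic and group-theoretic lemmas -/

lemma totient_sqfree_dvd {m r : ℕ} (hm0 : m ≠ 0) (hm : Squarefree m) (hr : r.Prime)
    (h : r ∣ m.totient) : ∃ q, q.Prime ∧ q ∣ m ∧ r ∣ q - 1 := by
  rw [Nat.totient_eq_prod_factorization hm0, Finsupp.prod] at h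
  obtain ⟨q, hq, hdvd⟩ := hr.prime.exists_mem_finset_dvd h
  rw [Nat.support_factorization] at hq
  have hqp : q.Prime := Nat.prime_of_mem_primeFactors hq
  have h1 : m.factorization q = 1 :=
    le_antisymm ((Nat.squarefree_iff_factorization_le_one hm0).mp hm q)
      (Nat.Prime.factorization_pos_of_dvd hqp hm0 (Nat.dvd_of_mem_primeFactors hq))
  rw [h1] at hdvd
  simp only [Nat.sub_self, pow_zero, one_mul] at hdvd
  exact ⟨q, hqp, Nat.dvd_of_mem_primeFactors hq, hdvd⟩

/-- Every group whose order `n` satisfies `gcd(n, φ(n)) = 1` is cyclic. -/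
lemma cyclic_of_cond : ∀ n : ℕ, Squarefree n →
    (∀ p q : ℕ, p.Prime → q.Prime → p ∣ n → q ∣ n → p ≠ q → ¬ p ∣ q - 1) →
    ∀ (G : Type) [Group G] [Finite G], Nat.card G = n → IsCyclic G := by
  intro n
  induction n using Nat.strong_induction_on with
  | _ n ih =>
  intro hsq hcond G _ _ hcard
  have hn0 : n ≠ 0 := hsq.ne_zero
  rcases eq_or_ne n 1 with h1 | h1
  · have : Nat.card G = 1 := hcard.trans h1
    have : Subsingleton G := Nat.card_eq_one_iff_unique.mp this |>.1
    infer_instance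
  have key : ∀ d q : ℕ, d ∣ n → q.Prime → q ∣ n → d ∣ q - 1 → d = 1 := by
    intro d q hdn hq hqn hdq
    by_contra hd1
    have hrp : d.minFac.Prime := Nat.minFac_prime hd1
    have hrq : d.minFac ∣ q - 1 := (Nat.minFac_dvd d).trans hdq
    have h2 : 2 ≤ q := hq.two_le
    have hle : d.minFac ≤ q - 1 := Nat.le_of_dvd (by omega) hrq
    exact hcond d.minFac q hrp hq ((Nat.minFac_dvd d).trans hdn) hqn (by omega) hrq
  set p := n.minFac with hpdef
  have hp : p.Prime := Nat.minFac_prime h1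
  haveI : Fact p.Prime := ⟨hp⟩
  have hpn : p ∣ n := n.minFac_dvd
  have hfac1 : n.factorization p = 1 :=
    le_antisymm ((Nat.squarefree_iff_factorization_le_one hn0).mp hsq p)
      (hp.factorization_pos_of_dvd hn0 hpn)
  obtain ⟨P⟩ : Nonempty (Sylow p G) := inferInstance
  have hPcard : Nat.card P = p := by
    rw [Sylow.card_eq_multiplicity, hcard, hfac1, pow_one]
  haveI hPcyc : IsCyclic P := isCyclic_of_prime_card hPcard
  have hP : Subgroup.normalizer ((P : Subgroup G) : Set G) ≤ Subgroup.centralizer ((P : Subgroup G) : Set G) := by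
    intro g hg
    have hker : (⟨g, hg⟩ : Subgroup.normalizer ((P : Subgroup G) : Set G)) ∈
        (Subgroup.centralizer ((P : Subgroup G) : Set G)).subgroupOf (Subgroup.normalizer ((P : Subgroup G) : Set G)) := by
      rw [← Subgroup.normalizerMonoidHom_ker, MonoidHom.mem_ker]
      set x : Subgroup.normalizer ((P : Subgroup G) : Set G) := ⟨g, hg⟩
      set f := (P : Subgroup G).normalizerMonoidHom
      have hd1 : orderOf (f x) ∣ Nat.card (MulAut (P : Subgroup G)) := orderOf_dvd_natCard _
      rw [IsCyclic.card_mulAut, hPcard] at hd1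
      have hd2 : orderOf (f x) ∣ n := by
        calc orderOf (f x) ∣ orderOf x := orderOf_map_dvd f x
        _ ∣ Nat.card (Subgroup.normalizer ((P : Subgroup G) : Set G)) := orderOf_dvd_natCard x
        _ ∣ n := hcard ▸ Subgroup.card_subgroup_dvd_card _
      have := key (orderOf (f x)) p hd2 hp hpn (by rwa [Nat.totient_prime hp] at hd1)
      exact orderOf_eq_one_iff.mp this
    rwa [Subgroup.mem_subgroupOf] at hker
  set K := (MonoidHom.transferSylow P hP).ker with hKdef
  have hcompl : K.IsComplement' P := MonoidHom.ker_transferSylow_isComplement' P hP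
  have hcardmul : Nat.card K * Nat.card P = Nat.card G := hcompl.card_mul
  have hKcard : Nat.card K = n / p := by
    rw [hPcard, hcard] at hcardmul
    exact (Nat.div_eq_of_eq_mul_left hp.pos hcardmul.symm).symm
  set m := n / p with hmdef
  have hmn : m ∣ n := Nat.div_dvd_of_dvd hpn
  have hmpn : m * p = n := by rw [hPcard, hcard] at hcardmul; rw [← hKcard]; exact hcardmul
  have hm0 : m ≠ 0 := by rintro h; rw [h] at hmpn; simp at hmpn; exact hn0 hmpn.symm
  have hmlt : m < n := by
    have := hp.two_le
    have hm1 : 1 ≤ m := Nat.pos_of_ne_zero hm0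
    rcases Nat.lt_or_ge m n with h | h
    · exact h
    · nlinarith
  haveI hKcyc : IsCyclic K := ih m hmlt (hsq.squarefree_of_dvd hmn)
    (fun a b ha hb han hbn => hcond a b ha hb (han.trans hmn) (hbn.trans hmn)) K hKcard
  have hcentral : ∀ (g : G) (k : K), g * (k : G) * g⁻¹ = k := by
    intro g k
    have h1 : orderOf (MulAut.conjNormal (H := K) g) ∣ Nat.card (MulAut K) :=
      orderOf_dvd_natCard _
    rw [IsCyclic.card_mulAut, hKcard] at h1
    have h2 : orderOf (MulAut.conjNormal (H := K) g) ∣ n := by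
      calc orderOf (MulAut.conjNormal (H := K) g) ∣ orderOf g := orderOf_map_dvd _ g
      _ ∣ n := hcard ▸ orderOf_dvd_natCard g
    have htriv : MulAut.conjNormal (H := K) g = 1 := by
      rcases eq_or_ne (orderOf (MulAut.conjNormal (H := K) g)) 1 with h | h
      · exact orderOf_eq_one_iff.mp h
      · exfalso
        set d := orderOf (MulAut.conjNormal (H := K) g) with hd
        have hrp : d.minFac.Prime := Nat.minFac_prime h
        have hrt : d.minFac ∣ Nat.totient m := (Nat.minFac_dvd d).trans h1
        obtain ⟨q, hqp, hqm, hrq⟩ := totient_sqfree_dvd hm0 (hsq.squarefree_of_dvd hmn) hrp hrt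
        exact absurd (key d.minFac q ((Nat.minFac_dvd d).trans h2) hqp (hqm.trans hmn) hrq)
          hrp.one_lt.ne'
    have := congrArg (fun (e : MulAut K) => (e k : G)) htriv
    simpa [MulAut.conjNormal_apply] using this
  obtain ⟨x, hx⟩ := hKcyc.exists_ofOrder_eq_natCard
  obtain ⟨y, hy⟩ := hPcyc.exists_ofOrder_eq_natCard
  have hcomm : Commute (x : G) ((y : P) : G) := by
    have := hcentral ((y : P) : G) x
    rw [mul_inv_eq_iff_eq_mul] at this
    exact this.symm
  have hox : orderOf (x : G) = m := by rw [Subgroup.orderOf_coe, hx, hKcard]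
  have hoy : orderOf ((y : P) : G) = p := by rw [Subgroup.orderOf_coe, hy, hPcard]
  have hcop : Nat.Coprime m p := by
    have : ¬ p ∣ m := by
      intro hpm
      have hd : p * p ∣ n := by rw [← hmpn]; exact mul_dvd_mul hpm dvd_rfl
      exact absurd (Nat.isUnit_iff.mp (hsq p hd)) hp.one_lt.ne'
    exact (Nat.coprime_comm.mp (hp.coprime_iff_not_dvd.mpr this))
  have : orderOf ((x : G) * ((y : P) : G)) = n := by
    rw [hcomm.orderOf_mul_eq_mul_orderOf_of_coprime (by rw [hox, hoy]; exact hcop), hox, hoy, hmpn]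
  exact isCyclic_of_orderOf_eq_card _ (by rw [this, hcard])

/-- A skew (left) brace: a set with two group structures `(A,+)` and `(A,∘)`
(the latter written multiplicatively) satisfying
`a ∘ (b + c) = a ∘ b - a + a ∘ c`. -/
class SkewBrace (A : Type*) extends AddGroup A, Group A where
  skew_left_distrib : ∀ a b c : A, a * (b + c) = a * b - a + a * c

/-! ## The lambda map of a skew brace -/

instance addAutMulGroup (M : Type*) [Add M] : Group (AddAut M) where
  mul g h := AddEquiv.trans h g
  one := AddEquiv.refl _
  inv := AddEquiv.symm
  mul_assoc _ _ _ := rfl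
  one_mul _ := rfl
  mul_one _ := rfl
  inv_mul_cancel := AddEquiv.self_trans_symm

namespace SkewBrace

variable {A : Type*} [SkewBrace A]

lemma mul_zero' (a : A) : a * (0 : A) = a := by
  have h := SkewBrace.skew_left_distrib a 0 0
  rw [add_zero, sub_eq_add_neg] at h
  have h2 : a * (0:A) + 0 = a * 0 + (-a + a * 0) := by
    rw [add_zero, ← add_assoc, ← h]
  have := add_left_cancel h2
  exact (neg_add_eq_zero.mp this.symm).symm

lemma one_eq_zero : (1 : A) = 0 := (mul_zero' 1).symm.trans (one_mul 0)

lemma mul_neg' (a b : A) : a * (-b) = a + -(a * b) + a := by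
  have h := SkewBrace.skew_left_distrib a b (-b)
  rw [add_neg_cancel, mul_zero', sub_eq_add_neg] at h
  have h2 : a * (-b) = -(a * b + -a) + a := by
    rw [eq_neg_add_iff_add_eq]
    exact h.symm
  rw [h2, neg_add_rev, neg_neg, add_assoc]

/-- The lambda map of a skew brace, as an additive automorphism. -/
def lam (a : A) : AddAut A :=
  AddEquiv.mk' ((Equiv.mulLeft a).trans (Equiv.addLeft (-a))) (by
    intro x y
    simp only [Equiv.trans_apply, Equiv.coe_mulLeft, Equiv.coe_addLeft]
    rw [SkewBrace.skew_left_distrib, sub_eq_add_neg]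
    simp [add_assoc])

@[simp] lemma lam_apply (a b : A) : lam a b = -a + a * b := rfl

/-- The lambda map as a group homomorphism from the circle group. -/
def lamHom : A →* AddAut A where
  toFun := lam
  map_one' := by
    ext b
    show lam 1 b = b
    simp [lam_apply, one_eq_zero]
  map_mul' := by
    intro a b
    ext c
    show -(a * b) + (a * b) * c = lam a (lam b c)
    simp only [lam_apply]
    rw [SkewBrace.skew_left_distrib a (-b) (b * c), mul_neg', mul_assoc, sub_eq_add_neg]
    simp [add_assoc, neg_add_cancel_left, add_neg_cancel_left]

end SkewBrace

/-! ## Backward direction -/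

lemma skewBrace_trivial_of_cond (n : ℕ) (hsq : Squarefree n)
    (hcond : ∀ p q : ℕ, p.Prime → q.Prime → p ∣ n → q ∣ n → p ≠ q → ¬ p ∣ q - 1)
    (A : Type) [Fintype A] [SkewBrace A] (hcard : Fintype.card A = n) :
    ∀ a b : A, a * b = a + b := by
  have hn0 : n ≠ 0 := hsq.ne_zero
  have hcardmult : Nat.card (Multiplicative A) = n := by
    rw [Nat.card_congr (Multiplicative.toAdd (α := A)), Nat.card_eq_fintype_card, hcard]
  haveI : Finite A := Fintype.finite ‹_›
  haveI hc : IsCyclic (Multiplicative A) :=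
    cyclic_of_cond n hsq hcond (Multiplicative A) hcardmult
  have hAut : Nat.card (AddAut A) = Nat.totient n := by
    have h1 : Nat.card (MulAut (Multiplicative A)) = Nat.totient n := by
      rw [IsCyclic.card_mulAut, hcardmult]
    rw [← h1]
    exact (Nat.card_congr
      (MulEquiv.toAdditive : (Multiplicative A ≃* Multiplicative A) ≃ (A ≃+ A))).symm
  have hcop : Nat.Coprime n n.totient := by
    by_contra h
    set g := Nat.gcd n n.totient with hg
    have hg1 : g ≠ 1 := h
    have hrp : g.minFac.Prime := Nat.minFac_prime hg1
    have hrn : g.minFac ∣ n := (Nat.minFac_dvd g).trans (Nat.gcd_dvd_left _ _)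
    have hrt : g.minFac ∣ n.totient := (Nat.minFac_dvd g).trans (Nat.gcd_dvd_right _ _)
    obtain ⟨q, hqp, hqn, hrq⟩ := totient_sqfree_dvd hn0 hsq hrp hrt
    have h2 : 2 ≤ q := hqp.two_le
    have hle : g.minFac ≤ q - 1 := Nat.le_of_dvd (by omega) hrq
    exact hcond g.minFac q hrp hqp hrn hqn (by omega) hrq
  intro a b
  have h1 : orderOf (SkewBrace.lamHom a) ∣ n := by
    calc orderOf (SkewBrace.lamHom a) ∣ orderOf a := orderOf_map_dvd _ a
    _ ∣ n := by rw [← hcard, ← Nat.card_eq_fintype_card]; exact orderOf_dvd_natCard a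
  have h2 : orderOf (SkewBrace.lamHom a) ∣ n.totient := hAut ▸ orderOf_dvd_natCard _
  have h3 : SkewBrace.lamHom a = 1 :=
    orderOf_eq_one_iff.mp (Nat.dvd_one.mp (hcop ▸ Nat.dvd_gcd h1 h2))
  have h4 : -a + a * b = b := by
    have := congrArg (fun e : AddAut A => e b) h3
    exact this
  conv_rhs => rw [← h4]
  rw [add_neg_cancel_left]

/-! ## Constructions of nontrivial skew braces -/

instance prodSkewBrace (A B : Type*) [SkewBrace A] [SkewBrace B] : SkewBrace (A × B) where
  skew_left_distrib a b c := by
    ext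
    · exact SkewBrace.skew_left_distrib a.1 b.1 c.1
    · exact SkewBrace.skew_left_distrib a.2 b.2 c.2

instance oppGroup (G : Type*) [Group G] : Group (Additive G) where
  mul a b := Additive.ofMul (b.toMul * a.toMul)
  mul_assoc a b c := congrArg Additive.ofMul (mul_assoc _ _ _).symm
  one := Additive.ofMul 1
  one_mul a := congrArg Additive.ofMul (mul_one _)
  mul_one a := congrArg Additive.ofMul (one_mul _)
  inv a := Additive.ofMul (a.toMul)⁻¹
  inv_mul_cancel a := congrArg Additive.ofMul (mul_inv_cancel _)

lemma oppMul_def {G : Type*} [Group G] (a b : Additive G) :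
    a * b = Additive.ofMul (b.toMul * a.toMul) := rfl

instance oppSkewBrace (G : Type*) [Group G] : SkewBrace (Additive G) where
  skew_left_distrib a b c := by
    show Additive.ofMul _ = _
    rw [sub_eq_add_neg]
    show Additive.ofMul ((b.toMul * c.toMul) * a.toMul) =
      Additive.ofMul ((b.toMul * a.toMul) * (a.toMul)⁻¹ * (c.toMul * a.toMul))
    group

def B1 (p : ℕ) : Type := ZMod (p ^ 2)

namespace B1
variable (p : ℕ)

def zo : ZMod (p ^ 2) → B1 p := id
def oz : B1 p → ZMod (p ^ 2) := id

instance : AddGroup (B1 p) := inferInstanceAs (AddGroup (ZMod (p ^ 2)))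

def circ (a b : ZMod (p ^ 2)) : ZMod (p ^ 2) := a + b + p * a * b

lemma hp2 : ((p : ZMod (p ^ 2)) * p) = 0 := by
  have h : ((p ^ 2 : ℕ) : ZMod (p ^ 2)) = 0 := ZMod.natCast_self _
  push_cast at h
  linear_combination h

instance : Group (B1 p) where
  mul a b := zo p (circ p (oz p a) (oz p b))
  one := zo p 0
  inv a := zo p (-(oz p a) + p * (oz p a) ^ 2)
  mul_assoc a b c := by
    show zo p (circ p (circ p (oz p a) (oz p b)) (oz p c))
      = zo p (circ p (oz p a) (circ p (oz p b) (oz p c)))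
    unfold circ; congr 1; ring
  one_mul a := by
    show (0 : ZMod (p ^ 2)) + oz p a + p * 0 * oz p a = oz p a
    simp
  mul_one a := by
    show oz p a + (0 : ZMod (p ^ 2)) + p * oz p a * 0 = oz p a
    simp
  inv_mul_cancel a := by
    show zo p (circ p (-(oz p a) + p * (oz p a) ^ 2) (oz p a)) = zo p 0
    unfold circ; congr 1
    linear_combination ((oz p a) ^ 3 : ZMod (p ^ 2)) * hp2 p

instance : SkewBrace (B1 p) where
  skew_left_distrib a b c := by
    show zo p (circ p (oz p a) (oz p (b + c)))
      = zo p (circ p (oz p a) (oz p b)) - a + zo p (circ p (oz p a) (oz p c))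
    show zo p (circ p (oz p a) (oz p b + oz p c))
      = zo p (circ p (oz p a) (oz p b) - oz p a + circ p (oz p a) (oz p c))
    unfold circ; congr 1; ring

def e : B1 p := zo p (1 : ZMod (p ^ 2))

lemma nontriv (hp : p.Prime) : e p * e p ≠ e p + e p := by
  intro h
  have h2 : circ p 1 1 = (1 : ZMod (p ^ 2)) + 1 := h
  unfold circ at h2
  have h3 : (p : ZMod (p ^ 2)) = 0 := by linear_combination h2
  haveI : NeZero (p ^ 2) := ⟨pow_ne_zero 2 hp.pos.ne'⟩
  rw [ZMod.natCast_eq_zero_iff] at h3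
  have := Nat.le_of_dvd hp.pos h3
  nlinarith [hp.two_le]

end B1

open SemidirectProduct

def sdEquiv {N H : Type} [Group N] [Group H] (φ : H →* MulAut N) :
    (N ⋊[φ] H) ≃ N × H where
  toFun x := (x.left, x.right)
  invFun p := ⟨p.1, p.2⟩
  left_inv _ := rfl
  right_inv _ := rfl

def autEquiv (q : ℕ) : Multiplicative (AddAut (ZMod q)) ≃* MulAut (Multiplicative (ZMod q)) :=
  { (Multiplicative.toAdd.trans AddEquiv.toMultiplicative :
      Multiplicative (AddAut (ZMod q)) ≃ MulAut (Multiplicative (ZMod q))) with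
    map_mul' := fun _ _ => rfl }

section
variable (p q : ℕ) [Fact p.Prime] [Fact q.Prime]

noncomputable def uq (hpq : p ∣ q - 1) : (ZMod q)ˣ := by
  have : p ∣ Fintype.card (ZMod q)ˣ := by
    rwa [ZMod.card_units_eq_totient, Nat.totient_prime (Fact.out : q.Prime)]
  exact (exists_prime_orderOf_dvd_card p this).choose

lemma uq_order (hpq : p ∣ q - 1) : orderOf (uq p q hpq) = p := by
  have : p ∣ Fintype.card (ZMod q)ˣ := by
    rwa [ZMod.card_units_eq_totient, Nat.totient_prime (Fact.out : q.Prime)]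
  exact (exists_prime_orderOf_dvd_card p this).choose_spec

noncomputable def psi0 (hpq : p ∣ q - 1) : Multiplicative (ZMod p) →* (ZMod q)ˣ :=
  AddMonoidHom.toMultiplicativeLeft (ZMod.lift p
    ⟨zmultiplesHom (Additive (ZMod q)ˣ) (Additive.ofMul (uq p q hpq)), by
      have h2 : (uq p q hpq) ^ (p : ℕ) = 1 :=
        orderOf_dvd_iff_pow_eq_one.mp (dvd_of_eq (uq_order p q hpq))
      show ((p : ℤ) • Additive.ofMul (uq p q hpq)) = 0
      have h3 : ((p : ℤ) • Additive.ofMul (uq p q hpq))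
          = Additive.ofMul ((uq p q hpq) ^ ((p : ℕ) : ℤ)) := rfl
      rw [h3, zpow_natCast, h2]; rfl⟩)

lemma psi0_apply (hpq : p ∣ q - 1) :
    psi0 p q hpq (Multiplicative.ofAdd (1 : ZMod p)) = uq p q hpq := by
  unfold psi0
  rw [AddMonoidHom.coe_toMultiplicativeLeft]
  simp only [Function.comp_apply, toAdd_ofAdd]
  have h1 : (1 : ZMod p) = ((1 : ℤ) : ZMod p) := by push_cast; rfl
  rw [h1, ZMod.lift_coe]
  simp [zmultiplesHom_apply]

noncomputable def phi (hpq : p ∣ q - 1) :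
    Multiplicative (ZMod p) →* MulAut (Multiplicative (ZMod q)) :=
  ((autEquiv q).toMonoidHom.comp (AddAut.mulLeft (R := ZMod q))).comp (psi0 p q hpq)

noncomputable abbrev G0 (hpq : p ∣ q - 1) : Type :=
  Multiplicative (ZMod q) ⋊[phi p q hpq] Multiplicative (ZMod p)

lemma noncomm (hpq : p ∣ q - 1) : ∃ x y : G0 p q hpq, x * y ≠ y * x := by
  refine ⟨inl (Multiplicative.ofAdd (1 : ZMod q)), inr (Multiplicative.ofAdd (1 : ZMod p)), ?_⟩
  intro h
  have hL := congrArg SemidirectProduct.left h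
  simp only [mul_left, left_inl, right_inl, left_inr, right_inr, map_one, MulAut.one_apply,
    one_mul, mul_one] at hL
  have hphi : phi p q hpq (Multiplicative.ofAdd (1 : ZMod p)) (Multiplicative.ofAdd (1 : ZMod q))
      = Multiplicative.ofAdd ((uq p q hpq : ZMod q)) := by
    show (autEquiv q) (AddAut.mulLeft (psi0 p q hpq (Multiplicative.ofAdd (1 : ZMod p))))
        (Multiplicative.ofAdd (1 : ZMod q)) = _
    rw [psi0_apply]
    show Multiplicative.ofAdd (((uq p q hpq) : ZMod q) * (1 : ZMod q)) = _
    rw [mul_one]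
  rw [hphi] at hL
  have hval : ((uq p q hpq : ZMod q)) = 1 := by
    have := congrArg Multiplicative.toAdd hL
    simpa using this.symm
  have h1 : uq p q hpq = 1 := Units.val_eq_one.mp hval
  have h2 := uq_order p q hpq
  rw [h1, orderOf_one] at h2
  exact (Fact.out : p.Prime).one_lt.ne' h2.symm

end

/-! ## Forward direction: nontriviality constructions -/

lemma not_all_trivial_sq (n p : ℕ) (hp : p.Prime) (hdvd : p ^ 2 ∣ n) (hn : 0 < n) :
    ¬ (∀ (A : Type) [Fintype A] [SkewBrace A], Fintype.card A = n →
      (∀ a b : A, a * b = a + b)) := by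
  intro h
  set m := n / p ^ 2 with hmdef
  have hm : p ^ 2 * m = n := Nat.mul_div_cancel' hdvd
  have hm0 : m ≠ 0 := by
    rintro h0; rw [h0, Nat.mul_zero] at hm; omega
  haveI : NeZero m := ⟨hm0⟩
  haveI : NeZero (p ^ 2) := ⟨pow_ne_zero 2 hp.pos.ne'⟩
  letI : Fintype (B1 p) := inferInstanceAs (Fintype (ZMod (p ^ 2)))
  have hcard : Fintype.card (B1 p × Additive (Multiplicative (ZMod m))) = n := by
    rw [Fintype.card_prod]
    have h1 : Fintype.card (B1 p) = p ^ 2 := ZMod.card _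
    have h2 : Fintype.card (Additive (Multiplicative (ZMod m))) = m :=
      (Fintype.card_congr (Additive.toMul.trans Multiplicative.toAdd)).trans (ZMod.card m)
    rw [h1, h2, hm]
  have := h (B1 p × Additive (Multiplicative (ZMod m))) hcard (B1.e p, 0) (B1.e p, 0)
  exact B1.nontriv p hp (congrArg Prod.fst this)

lemma not_all_trivial_pq (n p q : ℕ) (hp : p.Prime) (hq : q.Prime) (hne : p ≠ q)
    (hpn : p ∣ n) (hqn : q ∣ n) (hpq : p ∣ q - 1) (hn : 0 < n) :
    ¬ (∀ (A : Type) [Fintype A] [SkewBrace A], Fintype.card A = n →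
      (∀ a b : A, a * b = a + b)) := by
  intro h
  haveI := Fact.mk hp
  haveI := Fact.mk hq
  have hpqn : p * q ∣ n :=
    Nat.Coprime.mul_dvd_of_dvd_of_dvd ((Nat.coprime_primes hp hq).mpr hne) hpn hqn
  set m := n / (p * q) with hmdef
  have hm : (p * q) * m = n := Nat.mul_div_cancel' hpqn
  have hm0 : m ≠ 0 := by rintro h0; rw [h0, Nat.mul_zero] at hm; omega
  haveI : NeZero m := ⟨hm0⟩
  haveI : NeZero p := ⟨hp.pos.ne'⟩
  haveI : NeZero q := ⟨hq.pos.ne'⟩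
  letI : Fintype (G0 p q hpq) := Fintype.ofEquiv _ (sdEquiv _).symm
  obtain ⟨x, y, hxy⟩ := noncomm p q hpq
  apply hxy
  have hcard : Fintype.card (Additive (G0 p q hpq × Multiplicative (ZMod m))) = n := by
    have h1 : Fintype.card (G0 p q hpq) = q * p := by
      rw [Fintype.card_congr (sdEquiv _), Fintype.card_prod]
      have hq' : Fintype.card (Multiplicative (ZMod q)) = q :=
        (Fintype.card_congr Multiplicative.toAdd).trans (ZMod.card q)
      have hp' : Fintype.card (Multiplicative (ZMod p)) = p :=
        (Fintype.card_congr Multiplicative.toAdd).trans (ZMod.card p)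
      rw [hq', hp']
    have h2 : Fintype.card (Additive (G0 p q hpq × Multiplicative (ZMod m)))
        = Fintype.card (G0 p q hpq) * Fintype.card (Multiplicative (ZMod m)) := by
      rw [← Fintype.card_prod]
      exact Fintype.card_congr Additive.toMul
    have h3 : Fintype.card (Multiplicative (ZMod m)) = m :=
      (Fintype.card_congr Multiplicative.toAdd).trans (ZMod.card m)
    rw [h2, h1, h3, ← hm]; ring
  have := h (Additive (G0 p q hpq × Multiplicative (ZMod m))) hcard
    (Additive.ofMul (x, 1)) (Additive.ofMul (y, 1))
  rw [oppMul_def] at this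
  have hmul := congrArg Additive.toMul this
  simp only [toMul_ofMul] at hmul
  -- hmul : (y,1) * (x,1) = (x,1) * (y,1)
  have := congrArg Prod.fst hmul
  simpa using this.symm

/-! ## Main theorem -/

/-- **Theorem A (2)⇔(3)'s content**: every skew brace of order `n` is trivial
(`a ∘ b = a + b`) if and only if `n` is square-free and `p ∤ q - 1` for all
distinct primes `p, q` dividing `n`. -/
theorem every_skewBrace_is_trivial_iff (n : ℕ) (hn : 0 < n) :
    (∀ (A : Type) [Fintype A] [SkewBrace A], Fintype.card A = n →
      (∀ a b : A, a * b = a + b)) ↔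
    ((∀ p ∈ n.primeFactors, n.factorization p = 1) ∧
      (∀ p ∈ n.primeFactors, ∀ q ∈ n.primeFactors, p ≠ q → ¬ p ∣ q - 1)) := by
  constructor
  · intro h
    constructor
    · intro p hpmem
      by_contra hne
      have hp := Nat.prime_of_mem_primeFactors hpmem
      have h1 : 1 ≤ n.factorization p :=
        hp.factorization_pos_of_dvd hn.ne' (Nat.dvd_of_mem_primeFactors hpmem)
      have h2 : 2 ≤ n.factorization p := by omega
      have hdvd : p ^ 2 ∣ n := (Nat.Prime.pow_dvd_iff_le_factorization hp hn.ne').mpr h2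
      exact not_all_trivial_sq n p hp hdvd hn h
    · intro p hpmem q hqmem hne hdvd
      exact not_all_trivial_pq n p q (Nat.prime_of_mem_primeFactors hpmem)
        (Nat.prime_of_mem_primeFactors hqmem) hne (Nat.dvd_of_mem_primeFactors hpmem)
        (Nat.dvd_of_mem_primeFactors hqmem) hdvd hn h
  · rintro ⟨h1, h2⟩ A _ _ hcard
    have hsq : Squarefree n := by
      rw [Nat.squarefree_iff_factorization_le_one hn.ne']
      intro p
      by_cases hp : p ∈ n.primeFactors
      · exact le_of_eq (h1 p hp)
      · rw [← Nat.support_factorization] at hp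
        rw [Finsupp.notMem_support_iff.mp hp]
        exact zero_le_one
    exact skewBrace_trivial_of_cond n hsq
      (fun p q hp hq hpn hqn hne => h2 p (Nat.mem_primeFactors.mpr ⟨hp, hpn, hn.ne'⟩)
        q (Nat.mem_primeFactors.mpr ⟨hq, hqn, hn.ne'⟩) hne)
      A hcard
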